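/- arXiv:2509.02393 — 9 statements merged into one kernel-verified Lean document; each statement's English description precedes it below -/
import Mathlib

section
/- For any finite alphabet Σ, subset Σ₁ ⊆ Σ, and words x', x ∈ Σ*, if x' is a prefix of x then x' − Σ₁ is a prefix of x − Σ₁. Here x − Σ₁ denotes the word obtained from x by replacing every maximal nonempty factor of x consisting only of letters from Σ₁ by its first letter. -/
open scoped ENNReal

namespace PA

variable {α : Type*}

/-- Block contraction auxiliary: `prev` records whether the previous letter was in `K`
(i.e., we are inside a `K`-block whose first letter was already kept). -/
def contractAux [DecidableEq α] (K : Finset α) : Bool → List α → List α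
  | _, [] => []
  | prev, a :: x =>
    if a ∈ K then
      (if prev then contractAux K true x else a :: contractAux K true x)
    else a :: contractAux K false x

/-- `contract K x` is `x − K`: every maximal nonempty factor of `x` consisting of
letters of `K` is replaced by its first letter. -/
def contract [DecidableEq α] (K : Finset α) (x : List α) : List α :=
  contractAux K false x

/-- `preim K x` is `x + K`, the preimage of `x` under `contract K`. -/
def preim [DecidableEq α] (K : Finset α) (x : List α) : Set (List α) :=
  {x' | contract K x' = x}

/-- `minPref L` is `L^≤`: the prefix-minimal elements of `L`. -/
def minPref (L : Set (List α)) : Set (List α) :=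
  {x ∈ L | ∀ x', x' <+: x → x' ≠ x → x' ∉ L}

/-- Fusion concatenation: for `u` ending in `a` and `v` starting with `a`,
`fuse u v` is `u ++ v` with one copy of the shared letter removed. -/
def fuse (u v : List α) : List α := u ++ v.tail

/-- Elementwise fusion of sets of words. -/
def setFuse (X Y : Set (List α)) : Set (List α) :=
  {z | ∃ u ∈ X, ∃ v ∈ Y, z = fuse u v}

/-- Probability mass of a set of words: sum of `P` over the prefix-minimal elements. -/
noncomputable def setP (P : List α → ℝ≥0∞) (R : Set (List α)) : ℝ≥0∞ :=
  ∑' x : minPref R, P x.1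

/-- `P ∈ 𝒯(S)`: substochastic transition probability function on `S⁺`. -/
def IsTPF [Fintype α] (P : List α → ℝ≥0∞) : Prop :=
  (∀ x, P x ≤ 1) ∧ (∀ s : α, P [s] = 1) ∧
  (∀ s : α, (∑ t : α, P [s, t]) ≤ 1) ∧
  (∀ (x y : List α) (s : α), P (x ++ s :: y) = P (x ++ [s]) * P (s :: y))

/-- `(K)₀^M`: the interior of `K` in the DTMC `(P, a)`: states of `K` other than `a`
with no incoming transition from outside `K`. -/
def interior [Fintype α] [DecidableEq α] (P : List α → ℝ≥0∞) (a : α) (K : Finset α) :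
    Set α :=
  {s | s ∈ K ∧ s ≠ a ∧ (∑ t ∈ Kᶜ, P [t, s]) = 0}

open Classical in
noncomputable def abstr [Fintype α] [DecidableEq α]
    (P : List α → ℝ≥0∞) (a : α) (K : Finset α) : List α → ℝ≥0∞ :=
  fun x =>
    if x.length = 1 then 1
    else if 2 ≤ x.length ∧ ∃ s ∈ x, s ∈ interior P a K then 0
    else setP P (preim K x)

open Classical in
noncomputable def OutSet [Fintype α] (P : List α → ℝ≥0∞) (S₁ : Finset α) : Finset α :=
  Finset.univ.filter fun t => t ∉ S₁ ∧ 0 < ∑ s ∈ S₁, P [s, t]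

open Classical in
noncomputable def USet [Fintype α] (P : List α → ℝ≥0∞) (S₁ : Finset α) : Finset α :=
  Finset.univ.filter fun r => r ∈ S₁ ∧
    0 < setP P {x | ∃ (w : List α) (t : α),
      x = r :: (w ++ [t]) ∧ (∀ c ∈ w, c ∈ S₁) ∧ t ∈ OutSet P S₁}

open Classical in
noncomputable def U1Set [Fintype α] (P : List α → ℝ≥0∞) (S₁ : Finset α) : Finset α :=
  Finset.univ.filter fun r => r ∈ S₁ ∧ 0 < ∑ t ∈ OutSet P S₁, P [r, t]

end PA

theorem contractAux_prefix_mono {α : Type*} [DecidableEq α]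
    (K : Finset α) : ∀ (prev : Bool) (x' x : List α), x' <+: x →
    PA.contractAux K prev x' <+: PA.contractAux K prev x := by
  intro prev x' x h
  induction x' generalizing prev x with
  | nil => simp [PA.contractAux]
  | cons a t ih =>
    obtain ⟨r, rfl⟩ := h
    simp only [List.cons_append, PA.contractAux]
    by_cases ha : a ∈ K
    · cases prev <;> simp [ha, ih _ _ ⟨r, rfl⟩]
    · simp [ha, ih _ _ ⟨r, rfl⟩]

/-- block contraction is monotone w.r.t. the prefix order. -/
theorem contract_prefix_mono {α : Type*} [DecidableEq α] [Fintype α]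
    (K : Finset α) (x' x : List α) (h : x' <+: x) :
    PA.contract K x' <+: PA.contract K x := by
  exact contractAux_prefix_mono K false x' x h
end

section
/- Let Σ be a finite alphabet, Σ₁ ⊆ Σ, x, y ∈ Σ*, and a ∈ Σ. If xa does not end in two consecutive letters from Σ₁ (i.e., xa ∉ Σ*Σ₁²), then (xay) − Σ₁ = ((xa) − Σ₁) ⋆ ((ay) − Σ₁), where u ⋆ v denotes fusion concatenation: for u ending in a and v starting with a, u ⋆ v is u concatenated with v with one copy of the shared letter a removed. -/
open scoped ENNReal

/-- contraction distributes over fusion at a cut point not inside a `K²` suffix. -/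
theorem contract_fuse {α : Type*} [DecidableEq α] [Fintype α]
    (K : Finset α) (x y : List α) (a : α)
    (h : ¬ ∃ (z : List α) (b c : α), x ++ [a] = z ++ [b, c] ∧ b ∈ K ∧ c ∈ K) :
    PA.contract K (x ++ [a] ++ y) =
      PA.fuse (PA.contract K (x ++ [a])) (PA.contract K (a :: y)) := by
  have aux : ∀ (x : List α) (prev : Bool),
      PA.contractAux K prev (x ++ a :: y) =
        PA.contractAux K prev (x ++ [a]) ++
          PA.contractAux K (if a ∈ K then true else false) y := by
    intro x
    induction x with
    | nil =>
      intro prev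
      by_cases ha : a ∈ K <;> cases prev <;>
        simp [PA.contractAux, ha]
    | cons b t ih =>
      intro prev
      by_cases hb : b ∈ K <;> cases prev <;>
        simp [PA.contractAux, hb, ih]
  rw [show x ++ [a] ++ y = x ++ a :: y by simp]
  unfold PA.fuse PA.contract
  rw [aux]
  by_cases ha : a ∈ K <;> simp [PA.contractAux, ha]
end

section
/- Let Σ be a finite alphabet, Σ₁ ⊆ Σ, x, y ∈ Σ*, and a ∈ Σ. Then ((xa) + Σ₁)^≤ ⋆ ((ay) + Σ₁)^≤ = ((xay) + Σ₁)^≤, where for a word w, w + Σ₁ is the preimage of w under −Σ₁, L^≤ is the set of prefix-minimal elements of a language L, and X ⋆ Y is the elementwise fusion concatenation of sets of words (each element of X ends in a and each element of Y starts with a). -/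
open scoped ENNReal

namespace PAaux
open PA

variable {α : Type*} [DecidableEq α]

/-- The `prev` flag after processing a list, starting from flag `p`. -/
def cflag (K : Finset α) : Bool → List α → Bool
  | p, [] => p
  | _, a :: x => cflag K (decide (a ∈ K)) x

lemma contractAux_cons_kept (K : Finset α) {c : α} {p : Bool}
    (hkept : ¬(c ∈ K ∧ p = true)) (l : List α) :
    contractAux K p (c :: l) = c :: contractAux K (decide (c ∈ K)) l := by
  by_cases hc : c ∈ K
  · have hp : p = false := by
      cases p
      · rfl
      · exact absurd ⟨hc, rfl⟩ hkept
    subst hp; simp [contractAux, hc]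
  · cases p <;> simp [contractAux, hc]

lemma contractAux_cons_absorbed (K : Finset α) {c : α} (hc : c ∈ K) (l : List α) :
    contractAux K true (c :: l) = contractAux K true l := by
  simp [contractAux, hc]

lemma contractAux_append (K : Finset α) (l : List α) : ∀ (p : Bool) (m : List α),
    contractAux K p (l ++ m) = contractAux K p l ++ contractAux K (cflag K p l) m := by
  induction l with
  | nil => intro p m; simp [contractAux, cflag]
  | cons a l ih =>
    intro p m
    by_cases h : a ∈ K <;> cases p <;>
      simp [contractAux, cflag, h, ih]

lemma cflag_concat (K : Finset α) (l : List α) : ∀ (p : Bool) (b : α),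
    cflag K p (l ++ [b]) = decide (b ∈ K) := by
  induction l with
  | nil => intro p b; simp [cflag]
  | cons a l ih => intro p b; simp [cflag, ih]

lemma contractAux_singleton (K : Finset α) (q : Bool) (b : α) :
    contractAux K q [b] = if b ∈ K ∧ q = true then [] else [b] := by
  cases q <;> by_cases h : b ∈ K <;> simp [contractAux, h]

lemma contract_concat (K : Finset α) (l : List α) (b : α) :
    contract K (l ++ [b])
      = contract K l ++ (if b ∈ K ∧ cflag K false l = true then [] else [b]) := by
  rw [contract, contractAux_append, contractAux_singleton]
  rfl

lemma contract_cons (K : Finset α) (a : α) (x : List α) :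
    contract K (a :: x) = a :: contractAux K (decide (a ∈ K)) x := by
  by_cases h : a ∈ K <;> simp [contract, contractAux, h]

lemma contract_prefix (K : Finset α) {u w : List α} (h : u <+: w) :
    contract K u <+: contract K w := by
  obtain ⟨t, rfl⟩ := h
  rw [contract, contract, contractAux_append]
  exact ⟨_, rfl⟩

lemma mem_minPref_iff (K : Finset α) (z w : List α) (hz : z ≠ []) :
    w ∈ minPref (preim K z) ↔ contract K w = z ∧ contract K w.dropLast ≠ z := by
  constructor
  · rintro ⟨h1, h2⟩
    have hw0 : w ≠ [] := by
      rintro rfl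
      exact hz (h1.symm.trans rfl)
    refine ⟨h1, h2 _ w.dropLast_prefix ?_⟩
    intro he
    have : w.dropLast.length = w.length - 1 := List.length_dropLast
    rw [he] at this
    cases w with
    | nil => exact hw0 rfl
    | cons c t => simp at this
  · rintro ⟨h1, h2⟩
    refine ⟨h1, fun u hu hne hcu => ?_⟩
    have hlt : u.length < w.length :=
      lt_of_le_of_ne hu.length_le (fun he => hne (hu.eq_of_length he))
    have hud : u <+: w.dropLast := by
      refine List.prefix_of_prefix_length_le hu w.dropLast_prefix ?_
      rw [List.length_dropLast]; omega
    have hp1 : contract K u <+: contract K w.dropLast := contract_prefix K hud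
    have hp2 : contract K w.dropLast <+: contract K w := contract_prefix K w.dropLast_prefix
    rw [hcu] at hp1
    rw [h1] at hp2
    exact h2 (hp2.eq_of_length (le_antisymm hp2.length_le hp1.length_le))

lemma last_kept (K : Finset α) {w x : List α} {a : α}
    (hw : contract K w = x ++ [a]) (hmin : contract K w.dropLast ≠ x ++ [a]) :
    ∃ l, w = l ++ [a] ∧ contract K l = x ∧ ¬(a ∈ K ∧ cflag K false l = true) := by
  rcases List.eq_nil_or_concat w with rfl | ⟨l, b, rfl⟩
  · exact absurd hw (by simp [contract, contractAux])
  · rw [List.concat_eq_append] at *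
    rw [List.dropLast_concat] at hmin
    rw [contract_concat] at hw
    by_cases hcond : b ∈ K ∧ cflag K false l = true
    · rw [if_pos hcond, List.append_nil] at hw
      exact absurd hw hmin
    · rw [if_neg hcond] at hw
      obtain ⟨hx, hb⟩ := List.append_inj' hw rfl
      obtain rfl : b = a := by simpa using hb
      exact ⟨l, rfl, hx, hcond⟩

lemma split (K : Finset α) (w : List α) : ∀ (p : Bool) (s t : List α), s ≠ [] →
    contractAux K p w = s ++ t →
    ∃ w1 w2, w = w1 ++ w2 ∧ contractAux K p w1 = s ∧
      contractAux K (cflag K p w1) w2 = t ∧ contractAux K p w1.dropLast ≠ s := by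
  induction w with
  | nil =>
    intro p s t hs h
    simp [contractAux] at h
    exact absurd h.1 hs
  | cons c w' ih =>
    intro p s t hs h
    by_cases habs : c ∈ K ∧ p = true
    · obtain ⟨hc, hp⟩ := habs
      subst hp
      rw [contractAux_cons_absorbed K hc] at h
      obtain ⟨w1, w2, rfl, h1, h2, h3⟩ := ih true s t hs h
      have hw1 : w1 ≠ [] := by
        rintro rfl
        exact hs (h1.symm.trans rfl)
      refine ⟨c :: w1, w2, rfl, ?_, ?_, ?_⟩
      · rw [contractAux_cons_absorbed K hc, h1]
      · simpa [cflag, hc] using h2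
      · rw [List.dropLast_cons_of_ne_nil hw1, contractAux_cons_absorbed K hc]
        exact h3
    · rw [contractAux_cons_kept K habs] at h
      cases s with
      | nil => exact absurd rfl hs
      | cons s0 s' =>
        rw [List.cons_append, List.cons.injEq] at h
        obtain ⟨rfl, h⟩ := h
        cases s' with
        | nil =>
          refine ⟨[c], w', rfl, ?_, ?_, ?_⟩
          · rw [contractAux_cons_kept K habs]; rfl
          · simpa [cflag] using h
          · simp [contractAux]
        | cons s1 s'' =>
          obtain ⟨w1, w2, rfl, h1, h2, h3⟩ := ih (decide (c ∈ K)) (s1 :: s'') t (by simp) h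
          have hw1 : w1 ≠ [] := by
            rintro rfl
            simp [contractAux] at h1
          refine ⟨c :: w1, w2, rfl, ?_, ?_, ?_⟩
          · rw [contractAux_cons_kept K habs, h1]
          · simpa [cflag] using h2
          · rw [List.dropLast_cons_of_ne_nil hw1, contractAux_cons_kept K habs]
            intro hcon
            rw [List.cons.injEq] at hcon
            exact h3 hcon.2

end PAaux

/-- `((xa)+K)^≤ ⋆ ((ay)+K)^≤ = ((xay)+K)^≤`. -/
theorem minPref_preim_fuse {α : Type*} [DecidableEq α] [Fintype α]
    (K : Finset α) (x y : List α) (a : α) :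
    PA.setFuse (PA.minPref (PA.preim K (x ++ [a]))) (PA.minPref (PA.preim K (a :: y)))
      = PA.minPref (PA.preim K (x ++ [a] ++ y)) := by
  ext w
  simp only [PA.setFuse, Set.mem_setOf_eq]
  constructor
  · rintro ⟨u, hu, v, hv, rfl⟩
    rw [PAaux.mem_minPref_iff K _ _ (by simp)] at hu
    rw [PAaux.mem_minPref_iff K _ _ (by simp)] at hv
    obtain ⟨hu1, hu2⟩ := hu
    obtain ⟨hv1, hv2⟩ := hv
    obtain ⟨l, rfl, hl, -⟩ := PAaux.last_kept K hu1 hu2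
    obtain ⟨v0, v', rfl⟩ : ∃ v0 v', v = v0 :: v' := by
      cases v with
      | nil => exact absurd hv1 (by simp [PA.contract, PA.contractAux])
      | cons v0 v' => exact ⟨v0, v', rfl⟩
    rw [PAaux.contract_cons, List.cons.injEq] at hv1
    obtain ⟨rfl, hy⟩ := hv1
    have hfuse : PA.fuse (l ++ [v0]) (v0 :: v') = (l ++ [v0]) ++ v' := rfl
    rw [hfuse, PAaux.mem_minPref_iff K _ _ (by simp)]
    have hcf : PA.contractAux K (PAaux.cflag K false (l ++ [v0])) v' = y := by
      rw [PAaux.cflag_concat]; exact hy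
    constructor
    · rw [PA.contract, PAaux.contractAux_append, hcf]
      rw [PA.contract] at hu1
      rw [hu1]
    · rcases List.eq_nil_or_concat v' with rfl | ⟨m, c, rfl⟩
      · obtain rfl : y = [] := by simpa [PA.contractAux] using hcf.symm
        simpa using hu2
      · rw [List.concat_eq_append, ← List.append_assoc, List.dropLast_concat]
        rw [PA.contract, PAaux.contractAux_append, PAaux.cflag_concat]
        intro hcon
        rw [PA.contract] at hu1
        rw [hu1, List.append_assoc, List.append_assoc] at hcon
        have hm : PA.contractAux K (decide (v0 ∈ K)) m = y :=
          List.append_cancel_left (List.append_cancel_left hcon)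
        apply hv2
        rw [List.concat_eq_append, ← List.cons_append, List.dropLast_concat]
        rw [PAaux.contract_cons, hm]
  · intro hw
    rw [PAaux.mem_minPref_iff K _ _ (by simp)] at hw
    obtain ⟨hw1, hw2⟩ := hw
    obtain ⟨w1, w2, rfl, h1, h2, h3⟩ := PAaux.split K w false (x ++ [a]) y (by simp)
      (by rw [← PA.contract, hw1, List.append_assoc])
    have h1' : PA.contract K w1 = x ++ [a] := h1
    have h3' : PA.contract K w1.dropLast ≠ x ++ [a] := h3
    obtain ⟨l, rfl, hl, -⟩ := PAaux.last_kept K h1' h3'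
    rw [PAaux.cflag_concat] at h2
    refine ⟨l ++ [a], ?_, a :: w2, ?_, ?_⟩
    · rw [PAaux.mem_minPref_iff K _ _ (by simp)]
      exact ⟨h1', h3'⟩
    · rw [PAaux.mem_minPref_iff K _ _ (by simp)]
      refine ⟨by rw [PAaux.contract_cons, h2], ?_⟩
      rcases List.eq_nil_or_concat w2 with rfl | ⟨m, c, rfl⟩
      · simp [PA.contract, PA.contractAux]
      · rw [List.concat_eq_append, ← List.cons_append, List.dropLast_concat]
        rw [PAaux.contract_cons]
        intro hcon
        rw [List.cons.injEq] at hcon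
        apply hw2
        rw [List.concat_eq_append, ← List.append_assoc, List.dropLast_concat]
        rw [PA.contract, PAaux.contractAux_append, PAaux.cflag_concat, hcon.2]
        rw [← PA.contract, h1', List.append_assoc]
    · rfl
end

section
/- Let Σ be a finite alphabet and Σ₁ ⊆ Σ₂ ⊆ Σ. Then for all words x ∈ Σ*, applying −Σ₁ followed by −Σ₂ equals applying −Σ₂ directly: (x − Σ₁) − Σ₂ = x − Σ₂. -/
open scoped ENNReal

lemma contractAux_contractAux {α : Type*} [DecidableEq α]
    (K₁ K₂ : Finset α) (h : K₁ ⊆ K₂) :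
    ∀ (x : List α) (b₂ b₁ : Bool), (b₁ = true → b₂ = true) →
      PA.contractAux K₂ b₂ (PA.contractAux K₁ b₁ x) = PA.contractAux K₂ b₂ x := by
  intro x
  induction x with
  | nil => intro b₂ b₁ _; rfl
  | cons a x ih =>
    intro b₂ b₁ hb
    by_cases h1 : a ∈ K₁
    · have h2 : a ∈ K₂ := h h1
      cases b₁ with
      | true =>
        have hb2 : b₂ = true := hb rfl
        subst hb2
        simp only [PA.contractAux, if_pos h1, if_pos h2, if_pos rfl]
        exact ih true true (fun _ => rfl)
      | false =>
        simp only [PA.contractAux, if_pos h1, if_pos h2]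
        cases b₂ with
        | true =>
          simp only [PA.contractAux, if_pos h2, if_pos rfl, Bool.false_eq_true, if_false, if_true]
          exact ih true true (fun _ => rfl)
        | false =>
          simp only [PA.contractAux, if_pos h2, Bool.false_eq_true, if_false]
          rw [ih true true (fun _ => rfl)]
    · simp only [PA.contractAux, if_neg h1]
      by_cases h2 : a ∈ K₂
      · cases b₂ with
        | true =>
          simp only [PA.contractAux, if_pos h2, if_pos rfl]
          exact ih true false (by simp)
        | false =>
          simp only [PA.contractAux, if_pos h2, Bool.false_eq_true, if_false]
          rw [ih true false (by simp)]
      · simp only [PA.contractAux, if_neg h2]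
        rw [ih false false (by simp)]

/-- for `K₁ ⊆ K₂`, `(x − K₁) − K₂ = x − K₂`. -/
theorem contract_contract {α : Type*} [DecidableEq α] [Fintype α]
    (K₁ K₂ : Finset α) (h : K₁ ⊆ K₂) (x : List α) :
    PA.contract K₂ (PA.contract K₁ x) = PA.contract K₂ x := by
  exact contractAux_contractAux K₁ K₂ h x false false (by simp)
end

section
/- Let S be a finite set, P ∈ 𝒯(S) a substochastic transition probability function, s ∈ S, and R ⊂ sS* a finite set of words all starting with s. Then P(R) := Σ_{x ∈ R^≤} P(x) ≤ 1. -/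
open scoped ENNReal

open scoped ENNReal in
theorem prefixFree_sum_le_one {α : Type*} [Fintype α]
    (P : List α → ℝ≥0∞) (hP : PA.IsTPF P) :
    ∀ (n : ℕ) (s : α) (F : Finset (List α)),
      (∀ x ∈ F, ∃ y, x = s :: y) →
      (∀ x ∈ F, x.length ≤ n + 1) →
      (∀ x ∈ F, ∀ x' ∈ F, x' <+: x → x' = x) →
      (∑ x ∈ F, P x) ≤ 1 := by
  classical
  intro n
  induction n with
  | zero =>
    intro s F hs hlen _
    have hsub : F ⊆ {[s]} := by
      intro x hx
      obtain ⟨y, rfl⟩ := hs x hx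
      have := hlen _ hx
      simp only [List.length_cons] at this
      have : y = [] := by
        cases y with
        | nil => rfl
        | cons a l => simp at this
      simp [this]
    calc ∑ x ∈ F, P x ≤ ∑ x ∈ ({[s]} : Finset (List α)), P x :=
          Finset.sum_le_sum_of_subset hsub
      _ = P [s] := by simp
      _ = 1 := hP.2.1 s
  | succ n ih =>
    intro s F hs hlen hpf
    haveI : Inhabited α := ⟨s⟩
    by_cases h1 : [s] ∈ F
    · have hF : F = {[s]} := by
        apply Finset.eq_singleton_iff_unique_mem.mpr
        refine ⟨h1, fun x hx => ?_⟩
        obtain ⟨y, rfl⟩ := hs x hx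
        exact (hpf _ hx _ h1 ⟨y, rfl⟩).symm
      rw [hF]
      simp [hP.2.1 s]
    · -- every word has length ≥ 2, fiber by second letter
      have hform : ∀ x ∈ F, ∃ t y, x = s :: t :: y := by
        intro x hx
        obtain ⟨y, rfl⟩ := hs x hx
        cases y with
        | nil => exact absurd hx h1
        | cons a l => exact ⟨a, l, rfl⟩
      have hfib : ∑ x ∈ F, P x
          = ∑ t : α, ∑ x ∈ F.filter (fun x => x.tail.headI = t), P x := by
        exact (Finset.sum_fiberwise_of_maps_to (fun x _ => Finset.mem_univ _) P).symm
      rw [hfib]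
      have hbound : ∀ t : α,
          ∑ x ∈ F.filter (fun x => x.tail.headI = t), P x ≤ P [s, t] := by
        intro t
        set Ft := F.filter (fun x => x.tail.headI = t) with hFt
        have hmem : ∀ x ∈ Ft, ∃ y, x = s :: t :: y := by
          intro x hx
          rw [hFt, Finset.mem_filter] at hx
          obtain ⟨r, y, rfl⟩ := hform x hx.1
          have : r = t := by simpa using hx.2
          exact ⟨y, by rw [this]⟩
        have hsplit : ∀ x ∈ Ft, P x = P [s, t] * P x.tail := by
          intro x hx
          obtain ⟨y, rfl⟩ := hmem x hx
          have := hP.2.2.2 [s] y t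
          simpa using this
        rw [Finset.sum_congr rfl hsplit, ← Finset.mul_sum]
        have hinj : Set.InjOn List.tail (Ft : Set (List α)) := by
          intro x hx x' hx' h
          obtain ⟨y, rfl⟩ := hmem x hx
          obtain ⟨y', rfl⟩ := hmem x' hx'
          simp only [List.tail_cons] at h
          rw [h]
        have himg : ∑ x ∈ Ft, P x.tail = ∑ z ∈ Ft.image List.tail, P z :=
          (Finset.sum_image (fun x hx x' hx' h => hinj hx hx' h)).symm
        have htail_le : ∑ z ∈ Ft.image List.tail, P z ≤ 1 := by
          apply ih t
          · intro z hz
            obtain ⟨x, hx, rfl⟩ := Finset.mem_image.mp hz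
            obtain ⟨y, rfl⟩ := hmem x hx
            exact ⟨y, rfl⟩
          · intro z hz
            obtain ⟨x, hx, rfl⟩ := Finset.mem_image.mp hz
            have hxF : x ∈ F := (Finset.mem_filter.mp hx).1
            have := hlen x hxF
            obtain ⟨y, rfl⟩ := hmem x hx
            simp only [List.length_cons, List.tail_cons] at this ⊢
            omega
          · intro z hz z' hz' hpre
            obtain ⟨x, hx, rfl⟩ := Finset.mem_image.mp hz
            obtain ⟨x', hx', rfl⟩ := Finset.mem_image.mp hz'
            obtain ⟨y, rfl⟩ := hmem x hx
            obtain ⟨y', rfl⟩ := hmem x' hx'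
            simp only [List.tail_cons] at hpre ⊢
            have : (s :: t :: y') <+: (s :: t :: y) := by
              simpa [List.cons_prefix_cons] using hpre
            have := hpf _ (Finset.mem_filter.mp hx).1 _ (Finset.mem_filter.mp hx').1 this
            simpa using this
        calc P [s, t] * ∑ x ∈ Ft, P x.tail
            = P [s, t] * ∑ z ∈ Ft.image List.tail, P z := by rw [himg]
          _ ≤ P [s, t] := mul_le_of_le_one_right zero_le htail_le
      calc ∑ t : α, ∑ x ∈ F.filter (fun x => x.tail.headI = t), P x
          ≤ ∑ t : α, P [s, t] := Finset.sum_le_sum fun t _ => hbound t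
        _ ≤ 1 := hP.2.2.1 s

open scoped ENNReal in
/-- for a finite set `R` of words all starting with `s`, `P(R) ≤ 1`. -/
theorem setP_le_one_of_finite {α : Type*} [Fintype α]
    (P : List α → ℝ≥0∞) (hP : PA.IsTPF P) (s : α)
    (R : Set (List α)) (hfin : R.Finite) (hR : ∀ x ∈ R, ∃ y : List α, x = s :: y) :
    PA.setP P R ≤ 1 := by
  classical
  set M := PA.minPref R with hM
  have hMsub : M ⊆ R := fun x hx => hx.1
  have hMfin : M.Finite := hfin.subset hMsub
  have heq : PA.setP P R = ∑ x ∈ hMfin.toFinset, P x := by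
    rw [PA.setP, tsum_subtype]
    rw [tsum_eq_sum (s := hMfin.toFinset)
      (fun x hx => Set.indicator_of_notMem (fun h => hx (hMfin.mem_toFinset.mpr h)) P)]
    exact Finset.sum_congr rfl fun x hx =>
      Set.indicator_of_mem (hMfin.mem_toFinset.mp hx) P
  rw [heq]
  apply prefixFree_sum_le_one P hP (hMfin.toFinset.sup List.length) s
  · intro x hx
    exact hR x (hMsub (hMfin.mem_toFinset.mp hx))
  · intro x hx
    have := Finset.le_sup (f := List.length) hx
    omega
  · intro x hx x' hx' hpre
    by_contra hne
    have hxM := hMfin.mem_toFinset.mp hx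
    have hx'M := hMfin.mem_toFinset.mp hx'
    exact hxM.2 x' hpre hne (hMsub hx'M)
end

section
/- Let S be a finite set, P ∈ 𝒯(S) a substochastic transition probability function, s ∈ S, and R ⊆ sS* any (possibly infinite) set of words starting with s. Then P(R) := Σ_{x ∈ R^≤} P(x) ≤ 1. -/
open scoped ENNReal

open scoped ENNReal in
private lemma sum_prefixfree_le_one {α : Type*} [Fintype α]
    (P : List α → ℝ≥0∞) (hP : PA.IsTPF P) :
    ∀ (n : ℕ) (s : α) (F : Finset (List α)),
      (∑ x ∈ F, x.length) ≤ n →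
      (∀ x ∈ F, ∃ y, x = s :: y) →
      (∀ x ∈ F, ∀ x' ∈ F, x <+: x' → x = x') →
      ∑ x ∈ F, P x ≤ 1 := by
  intro n
  induction n with
  | zero =>
    intro s F hlen hhead _
    have hF : F = ∅ := by
      rcases F.eq_empty_or_nonempty with rfl | ⟨x, hx⟩
      · rfl
      · exfalso
        obtain ⟨y, rfl⟩ := hhead x hx
        have h1 : (1 : ℕ) ≤ ∑ x ∈ F, x.length :=
          le_trans (by simp) (Finset.single_le_sum (fun i _ => Nat.zero_le _) hx)
        omega
    simp [hF]
  | succ n ih =>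
    intro s F hlen hhead hpf
    classical
    rcases F.eq_empty_or_nonempty with rfl | hFne
    · simp
    by_cases hs : [s] ∈ F
    · have hsub : F ⊆ {[s]} := by
        intro x hx
        obtain ⟨y, rfl⟩ := hhead x hx
        have := hpf [s] hs (s :: y) hx ⟨y, rfl⟩
        simp [← this]
      calc ∑ x ∈ F, P x ≤ ∑ x ∈ ({[s]} : Finset (List α)), P x :=
            Finset.sum_le_sum_of_subset hsub
        _ = 1 := by simp [hP.2.1 s]
    · set T : Finset (List α) := F.image List.tail with hT
      have hinj : Set.InjOn (List.tail : List α → List α) (↑F : Set (List α)) := by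
        intro x hx x' hx' h
        obtain ⟨y, rfl⟩ := hhead x hx
        obtain ⟨y', rfl⟩ := hhead x' hx'
        simpa using h
      have hmemT : ∀ z ∈ T, z ≠ [] ∧ s :: z ∈ F := by
        intro z hz
        obtain ⟨x, hx, rfl⟩ := Finset.mem_image.1 hz
        obtain ⟨y, rfl⟩ := hhead x hx
        refine ⟨?_, by simpa using hx⟩
        rintro rfl
        exact hs (by simpa using hx)
      -- sum over F equals sum over tails
      have hsum : ∑ x ∈ F, P x = ∑ z ∈ T, P (s :: z) := by
        rw [hT, Finset.sum_image (fun x hx x' hx' h => hinj hx hx' h)]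
        refine Finset.sum_congr rfl fun x hx => ?_
        obtain ⟨y, rfl⟩ := hhead x hx
        rfl
      -- length bound for tails
      have hlenT : ∑ z ∈ T, z.length ≤ n := by
        have h1 : ∑ x ∈ F, x.length = (∑ z ∈ T, z.length) + F.card := by
          rw [hT, Finset.sum_image (fun x hx x' hx' h => hinj hx hx' h)]
          have he : ∀ x ∈ F, x.length = x.tail.length + 1 := by
            intro x hx
            obtain ⟨y, rfl⟩ := hhead x hx
            simp
          rw [Finset.sum_congr rfl he, Finset.sum_add_distrib]
          simp
        have h2 : 1 ≤ F.card := Finset.one_le_card.2 hFne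
        omega
      rw [hsum]
      rw [← Finset.sum_fiberwise_of_maps_to (g := fun z => z.headD s)
        (t := (Finset.univ : Finset α)) (fun z _ => Finset.mem_univ _)]
      have hfib : ∀ t : α,
          ∑ z ∈ T.filter (fun z => z.headD s = t), P (s :: z)
            ≤ P [s, t] * 1 := by
        intro t
        have hstep : ∀ z ∈ T.filter (fun z => z.headD s = t),
            P (s :: z) = P [s, t] * P z := by
          intro z hz
          rcases Finset.mem_filter.1 hz with ⟨hzT, hzh⟩
          obtain ⟨hne, _⟩ := hmemT z hzT
          obtain ⟨a, zs, rfl⟩ := List.exists_cons_of_ne_nil hne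
          have ha : a = t := by simpa using hzh
          subst ha
          have := hP.2.2.2 [s] zs a
          simpa using this
        rw [Finset.sum_congr rfl hstep, ← Finset.mul_sum]
        refine mul_le_mul_right ?_ _
        refine ih t (T.filter (fun z => z.headD s = t)) ?_ ?_ ?_
        · exact le_trans (Finset.sum_le_sum_of_subset (Finset.filter_subset _ _)) hlenT
        · intro z hz
          rcases Finset.mem_filter.1 hz with ⟨hzT, hzh⟩
          obtain ⟨hne, _⟩ := hmemT z hzT
          obtain ⟨a, zs, rfl⟩ := List.exists_cons_of_ne_nil hne
          exact ⟨zs, by simpa using hzh ▸ rfl⟩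
        · intro z hz z' hz' hpre
          rcases Finset.mem_filter.1 hz with ⟨hzT, _⟩
          rcases Finset.mem_filter.1 hz' with ⟨hzT', _⟩
          have h1 := (hmemT z hzT).2
          have h2 := (hmemT z' hzT').2
          have : s :: z <+: s :: z' := by
            obtain ⟨u, rfl⟩ := hpre
            exact ⟨u, rfl⟩
          have := hpf _ h1 _ h2 this
          simpa using this
      calc ∑ t : α, ∑ z ∈ T.filter (fun z => z.headD s = t), P (s :: z)
          ≤ ∑ t : α, P [s, t] * 1 := Finset.sum_le_sum fun t _ => hfib t
        _ = ∑ t : α, P [s, t] := by simp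
        _ ≤ 1 := hP.2.2.1 s

open scoped ENNReal in
/-- for any set `R` of words all starting with `s`, `P(R) ≤ 1`. -/
theorem setP_le_one {α : Type*} [Fintype α]
    (P : List α → ℝ≥0∞) (hP : PA.IsTPF P) (s : α)
    (R : Set (List α)) (hR : ∀ x ∈ R, ∃ y : List α, x = s :: y) :
    PA.setP P R ≤ 1 := by
  classical
  rw [PA.setP, ENNReal.tsum_eq_iSup_sum]
  refine iSup_le fun G => ?_
  have hsum : ∑ x ∈ G, P x.1 = ∑ y ∈ G.image Subtype.val, P y :=
    (Finset.sum_image (fun x _ x' _ h => Subtype.ext h)).symm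
  rw [hsum]
  refine sum_prefixfree_le_one P hP (∑ y ∈ G.image Subtype.val, y.length) s _
    le_rfl ?_ ?_
  · intro y hy
    obtain ⟨x, _, rfl⟩ := Finset.mem_image.1 hy
    exact hR x.1 x.2.1
  · intro y hy y' hy' hpre
    obtain ⟨x, _, rfl⟩ := Finset.mem_image.1 hy
    obtain ⟨x', _, rfl⟩ := Finset.mem_image.1 hy'
    by_contra hne
    exact x'.2.2 x.1 hpre hne x.2.1
end

section
/- Let S be a finite set and P ∈ 𝒯(S) a substochastic transition probability function. If R ⊆ T ⊆ S⁺, then P(R) ≤ P(T), where P(L) := Σ_{x ∈ L^≤} P(x). (Note that R^≤ ⊆ T^≤ does not hold in general; monotonicity must be proved via mapping each element of R^≤ to its unique nonempty prefix in T^≤.) -/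
open scoped ENNReal

open scoped ENNReal in
private lemma PA.step_mul {α : Type*} [Fintype α] (P : List α → ℝ≥0∞) (hP : PA.IsTPF P)
    (y' : List α) (s t : α) :
    P ((y' ++ [s]) ++ [t]) = P (y' ++ [s]) * P [s, t] := by
  have := hP.2.2.2 y' [t] s
  simpa using this

open scoped ENNReal in
private lemma PA.antichain_sum_le {α : Type*} [Fintype α] (P : List α → ℝ≥0∞)
    (hP : PA.IsTPF P) :
    ∀ (n : ℕ) (y : List α), y ≠ [] → ∀ A : Finset (List α),
      (∀ x ∈ A, y <+: x ∧ x.length ≤ y.length + n) →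
      (∀ x1 ∈ A, ∀ x2 ∈ A, x1 <+: x2 → x1 = x2) →
      ∑ x ∈ A, P x ≤ P y := by
  classical
  intro n
  induction n with
  | zero =>
    intro y hy A hA _
    have hsub : A ⊆ {y} := by
      intro x hx
      obtain ⟨hpre, hlen⟩ := hA x hx
      have : x = y := (hpre.eq_of_length (by have := hpre.length_le; omega)).symm
      simp [this]
    calc ∑ x ∈ A, P x ≤ ∑ x ∈ ({y} : Finset (List α)), P x :=
          Finset.sum_le_sum_of_subset hsub
      _ = P y := by simp
  | succ n ih =>
    intro y hy A hA hanti
    by_cases hyA : y ∈ A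
    · have hsub : A ⊆ {y} := by
        intro x hx
        have := hanti y hyA x hx (hA x hx).1
        simp [← this]
      calc ∑ x ∈ A, P x ≤ ∑ x ∈ ({y} : Finset (List α)), P x :=
            Finset.sum_le_sum_of_subset hsub
        _ = P y := by simp
    · -- every element strictly extends y
      obtain ⟨y', s, hy2⟩ := (List.eq_nil_or_concat y).resolve_left hy
      rw [List.concat_eq_append] at hy2
      subst hy2
      set d : α := s
      have key : ∀ x ∈ A, ∃ t : α, ((y' ++ [s]) ++ [t]) <+: x := by
        intro x hx
        obtain ⟨hpre, _⟩ := hA x hx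
        obtain ⟨z, rfl⟩ := hpre
        have hz : z ≠ [] := by
          rintro rfl
          exact hyA (by simpa using hx)
        obtain ⟨t, z', rfl⟩ := List.exists_cons_of_ne_nil hz
        exact ⟨t, by simp [d]⟩
      have hfib : ∀ t : α,
          ∑ x ∈ A.filter (fun x => ((y' ++ [s]) ++ [t]) <+: x), P x
            ≤ P ((y' ++ [s]) ++ [t]) := by
        intro t
        apply ih ((y' ++ [s]) ++ [t]) (by simp)
        · intro x hx
          rw [Finset.mem_filter] at hx
          refine ⟨hx.2, ?_⟩
          have := (hA x hx.1).2
          simp only [List.length_append, List.length_singleton] at this ⊢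
          omega
        · intro x1 hx1 x2 hx2 h
          exact hanti x1 (Finset.mem_filter.mp hx1).1 x2 (Finset.mem_filter.mp hx2).1 h
      -- partition A by the next letter
      have hcover : ∑ x ∈ A, P x
          = ∑ t : α, ∑ x ∈ A.filter (fun x => x.getD (y' ++ [s]).length d = t
              ∧ ((y' ++ [s]) ++ [t]) <+: x), P x := by
        rw [← Finset.sum_fiberwise_of_maps_to (g := fun x => x.getD (y' ++ [s]).length d)
          (t := Finset.univ) (fun x _ => Finset.mem_univ _) P]
        apply Finset.sum_congr rfl
        intro t _
        apply Finset.sum_congr _ (fun _ _ => rfl)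
        apply Finset.filter_congr
        intro x hx
        obtain ⟨u, hu⟩ := key x hx
        obtain ⟨z, rfl⟩ := hu
        constructor
        · intro h
          have hre : (y' ++ [s] ++ [u] ++ z) = (y' ++ [s]) ++ (u :: z) := by simp
          have hval : (y' ++ [s] ++ [u] ++ z).getD (y' ++ [s]).length d = u := by
            rw [hre, List.getD_eq_getElem?_getD,
              List.getElem?_append_right (le_refl _), Nat.sub_self]
            simp
          rw [hval] at h
          subst h
          exact ⟨hval, ⟨z, by simp⟩⟩
        · rintro ⟨h1, _⟩
          exact h1
      rw [hcover]
      have h2 : ∀ t : α,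
          ∑ x ∈ A.filter (fun x => x.getD (y' ++ [s]).length d = t
              ∧ ((y' ++ [s]) ++ [t]) <+: x), P x ≤ P ((y' ++ [s]) ++ [t]) := by
        intro t
        refine le_trans (Finset.sum_le_sum_of_subset ?_) (hfib t)
        intro x hx
        rw [Finset.mem_filter] at hx ⊢
        exact ⟨hx.1, hx.2.2⟩
      calc ∑ t : α, ∑ x ∈ A.filter (fun x => x.getD (y' ++ [s]).length d = t
              ∧ ((y' ++ [s]) ++ [t]) <+: x), P x
          ≤ ∑ t : α, P ((y' ++ [s]) ++ [t]) := Finset.sum_le_sum (fun t _ => h2 t)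
        _ = ∑ t : α, P (y' ++ [s]) * P [s, t] := by
            apply Finset.sum_congr rfl
            intro t _
            exact PA.step_mul P hP y' s t
        _ = P (y' ++ [s]) * ∑ t : α, P [s, t] := by rw [Finset.mul_sum]
        _ ≤ P (y' ++ [s]) * 1 := by
            exact mul_le_mul_right (hP.2.2.1 s) _
        _ = P (y' ++ [s]) := mul_one _

private lemma PA.exists_minPref_prefix {α : Type*} (T : Set (List α))
    (hT : ∀ x ∈ T, x ≠ []) (x : List α) (hx : x ∈ T) :
    ∃ y, y ∈ PA.minPref T ∧ y <+: x := by
  classical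
  have hxne : x ≠ [] := hT x hx
  have hQ : ∃ n, x.take (n + 1) ∈ T := by
    refine ⟨x.length - 1, ?_⟩
    have : x.length - 1 + 1 = x.length := by
      have : 0 < x.length := List.length_pos_iff.mpr hxne
      omega
    rw [this, List.take_length]
    exact hx
  set n0 := Nat.find hQ with hn0
  refine ⟨x.take (n0 + 1), ⟨Nat.find_spec hQ, ?_⟩, List.take_prefix _ _⟩
  intro x' hpre hne hx'T
  have hx'ne : x' ≠ [] := hT x' hx'T
  have hlt : x'.length < (x.take (n0 + 1)).length := by
    have hle := hpre.length_le
    rcases lt_or_eq_of_le hle with h | h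
    · exact h
    · exact absurd (hpre.eq_of_length h) hne
  have hlen' : (x.take (n0 + 1)).length ≤ n0 + 1 := by simp
  have hpos : 0 < x'.length := List.length_pos_iff.mpr hx'ne
  have hle1 : x'.length ≤ n0 + 1 := by omega
  have hx'eq : x' = x.take x'.length := by
    have h1 : x' = (x.take (n0 + 1)).take x'.length := List.prefix_iff_eq_take.mp hpre
    conv_lhs => rw [h1]
    rw [List.take_take, Nat.min_eq_left hle1]
  have : x.take ((x'.length - 1) + 1) ∈ T := by
    have : x'.length - 1 + 1 = x'.length := by omega
    rw [this, ← hx'eq]; exact hx'T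
  exact Nat.find_min hQ (by omega) this

open scoped ENNReal in
/-- monotonicity of `setP`: `R ⊆ T ⊆ S⁺` implies `P(R) ≤ P(T)`. -/
theorem setP_mono {α : Type*} [Fintype α]
    (P : List α → ℝ≥0∞) (hP : PA.IsTPF P)
    (R T : Set (List α)) (hRT : R ⊆ T) (hT : ∀ x ∈ T, x ≠ []) :
    PA.setP P R ≤ PA.setP P T := by
  classical
  have hanti : ∀ x1 ∈ PA.minPref R, ∀ x2 ∈ PA.minPref R, x1 <+: x2 → x1 = x2 := by
    intro x1 hx1 x2 hx2 h
    by_contra hne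
    exact hx2.2 x1 h hne hx1.1
  have hchoice : ∀ x : ↥(PA.minPref R), ∃ y : ↥(PA.minPref T), y.1 <+: x.1 := by
    intro x
    obtain ⟨y, hy, hp⟩ := PA.exists_minPref_prefix T hT x.1 (hRT x.2.1)
    exact ⟨⟨y, hy⟩, hp⟩
  choose g hg using hchoice
  rw [PA.setP, PA.setP, ENNReal.tsum_eq_iSup_sum]
  apply iSup_le
  intro s
  have hfiber : ∑ x ∈ s, P x.1
      = ∑ y ∈ s.image g, ∑ x ∈ s.filter (fun x => g x = y), P x.1 :=
    (Finset.sum_fiberwise_of_maps_to (fun x hx => Finset.mem_image_of_mem g hx) _).symm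
  rw [hfiber]
  have hstep : ∀ y ∈ s.image g, ∑ x ∈ s.filter (fun x => g x = y), P x.1 ≤ P y.1 := by
    intro y _
    have hyne : y.1 ≠ [] := hT y.1 y.2.1
    set A : Finset (List α) := (s.filter (fun x => g x = y)).image Subtype.val with hA
    have : ∑ x ∈ s.filter (fun x => g x = y), P x.1 = ∑ x ∈ A, P x := by
      rw [hA, Finset.sum_image (fun a _ b _ h => Subtype.ext h)]
    rw [this]
    apply PA.antichain_sum_le P hP (s.sup fun x => x.1.length) y.1 hyne
    · intro x hx
      rw [hA, Finset.mem_image] at hx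
      obtain ⟨x', hx', rfl⟩ := hx
      rw [Finset.mem_filter] at hx'
      constructor
      · rw [← hx'.2]; exact hg x'
      · have : x'.1.length ≤ s.sup fun x => x.1.length :=
          Finset.le_sup (f := fun x => x.1.length) hx'.1
        omega
    · intro x1 hx1 x2 hx2 h
      rw [hA, Finset.mem_image] at hx1 hx2
      obtain ⟨x1', hx1', rfl⟩ := hx1
      obtain ⟨x2', hx2', rfl⟩ := hx2
      exact hanti x1'.1 x1'.2 x2'.1 x2'.2 h
  calc ∑ y ∈ s.image g, ∑ x ∈ s.filter (fun x => g x = y), P x.1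
      ≤ ∑ y ∈ s.image g, P y.1 := Finset.sum_le_sum hstep
    _ ≤ ∑' y : ↥(PA.minPref T), P y.1 := ENNReal.sum_le_tsum _
end

section
/- Let M = (P, a) be a substochastic DTMC on finite state space S and let S₁ ⊆ S. Define the path-abstraction function P_{S₁}^a : S⁺ → [0,∞] by: P_{S₁}^a(x) = 1 if |x| = 1; P_{S₁}^a(x) = 0 if |x| ≥ 2 and some letter of x lies in (S₁)₀^M := {s ∈ S₁∖{a} | P((S∖S₁)s) = 0}; and P_{S₁}^a(x) = P(x + S₁) otherwise. Then P_{S₁}^a is itself a substochastic transition probability function, i.e., P_{S₁}^a ∈ 𝒯(S): it takes values in [0,1], satisfies Σ_{t∈S} P_{S₁}^a(st) ≤ 1 for all s ∈ S, and P_{S₁}^a(xsy) = P_{S₁}^a(xs)·P_{S₁}^a(sy). -/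
open scoped ENNReal

section AuxLemmas

namespace PA

variable {α : Type*}

section Contract

variable [DecidableEq α] (K : Finset α)

/-- State tracker: whether the last letter read is in `K` (initial value `b`). -/
def stB (b : Bool) (l : List α) : Bool := l.foldl (fun _ a => decide (a ∈ K)) b

@[simp] lemma stB_nil (b : Bool) : stB K b [] = b := rfl

lemma stB_cons (b : Bool) (a : α) (l : List α) :
    stB K b (a :: l) = stB K (decide (a ∈ K)) l := rfl

lemma stB_append (b : Bool) (u v : List α) :
    stB K b (u ++ v) = stB K (stB K b u) v := List.foldl_append

lemma stB_concat (b : Bool) (u : List α) (c : α) :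
    stB K b (u ++ [c]) = decide (c ∈ K) := by
  rw [stB_append]; rfl

lemma caux_nil (b : Bool) : contractAux K b [] = [] := by cases b <;> rfl

lemma caux_cons (b : Bool) (a : α) (l : List α) :
    contractAux K b (a :: l) =
      (if b = true ∧ a ∈ K then [] else [a]) ++ contractAux K (decide (a ∈ K)) l := by
  by_cases h : a ∈ K <;> cases b <;> simp [contractAux, h]

lemma caux_append (b : Bool) (u v : List α) :
    contractAux K b (u ++ v) = contractAux K b u ++ contractAux K (stB K b u) v := by
  induction u generalizing b with
  | nil => rfl
  | cons a u ih =>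
      rw [List.cons_append, caux_cons, caux_cons, ih, stB_cons, List.append_assoc]

lemma contract_nil : contract K [] = [] := rfl

lemma contract_cons (a : α) (l : List α) :
    contract K (a :: l) = a :: contractAux K (decide (a ∈ K)) l := by
  rw [contract, caux_cons]
  simp

lemma contract_eq_nil {l : List α} : contract K l = [] ↔ l = [] := by
  cases l with
  | nil => simp [contract_nil]
  | cons a l => simp [contract_cons]

lemma contract_append (u v : List α) :
    contract K (u ++ v) = contract K u ++ contractAux K (stB K false u) v :=
  caux_append K false u v

lemma contract_concat (u : List α) (c : α) :
    contract K (u ++ [c]) =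
      contract K u ++ (if stB K false u = true ∧ c ∈ K then [] else [c]) := by
  rw [contract_append, caux_cons, caux_nil, List.append_nil]

lemma contract_prefix {u w : List α} (h : u <+: w) :
    contract K u <+: contract K w := by
  obtain ⟨v, rfl⟩ := h
  rw [contract_append]
  exact List.prefix_append _ _

end Contract

lemma prefix_dropLast {u w : List α} (h : u <+: w) (hne : u ≠ w) :
    u <+: w.dropLast := by
  have hl : u.length < w.length :=
    lt_of_le_of_ne h.length_le fun e => hne (h.eq_of_length e)
  rw [List.prefix_iff_eq_take] at h ⊢
  rw [List.dropLast_eq_take, List.take_take]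
  have hm : u.length ⊓ (w.length - 1) = u.length := by omega
  rw [hm]
  exact h

section Min

variable [DecidableEq α] (K : Finset α)

lemma mem_minPref {x x' : List α} (hne : x' ≠ []) :
    x' ∈ minPref (preim K x) ↔ contract K x' = x ∧ contract K x'.dropLast ≠ x := by
  constructor
  · rintro ⟨h1, h2⟩
    refine ⟨h1, h2 _ (List.dropLast_prefix x') ?_⟩
    intro e
    have hl := congrArg List.length e
    rw [List.length_dropLast] at hl
    have h0 : x'.length ≠ 0 := by simpa using hne
    omega
  · rintro ⟨h1, h2⟩
    refine ⟨h1, fun u hu hne' hmem => ?_⟩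
    have hu' : u <+: x'.dropLast := prefix_dropLast hu hne'
    have h3 : contract K u <+: contract K x'.dropLast := contract_prefix K hu'
    have h4 : contract K x'.dropLast <+: contract K x' :=
      contract_prefix K (List.dropLast_prefix _)
    have hmem' : contract K u = x := hmem
    rw [hmem'] at h3
    rw [h1] at h4
    exact h2 (h4.eq_of_length (le_antisymm h4.length_le h3.length_le))

lemma preim_head {s : α} {y x' : List α} (h : x' ∈ preim K (s :: y)) :
    ∃ r, x' = s :: r := by
  cases x' with
  | nil =>
      have h' : contract K ([] : List α) = s :: y := h
      rw [contract_nil] at h'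
      exact absurd h' (by simp)
  | cons a r =>
      have h' : contract K (a :: r) = s :: y := h
      rw [contract_cons] at h'
      exact ⟨r, by rw [(List.cons.injEq _ _ _ _).mp h' |>.1]⟩

lemma minPref_concat_last {x : List α} {s : α} {x' : List α}
    (h : x' ∈ minPref (preim K (x ++ [s]))) :
    ∃ u₀, x' = u₀ ++ [s] ∧ contract K u₀ = x := by
  have hne : x' ≠ [] := by
    rintro rfl
    have h' : contract K ([] : List α) = x ++ [s] := h.1
    rw [contract_nil] at h'
    exact absurd h'.symm (by simp)
  obtain ⟨u₀, c, rfl⟩ : ∃ u₀ c, x' = u₀ ++ [c] := by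
    rcases List.eq_nil_or_concat x' with h' | ⟨L, b, h'⟩
    · exact absurd h' hne
    · exact ⟨L, b, by rw [h', List.concat_eq_append]⟩
  rw [mem_minPref K hne] at h
  obtain ⟨h1, h2⟩ := h
  rw [List.dropLast_concat] at h2
  rw [contract_concat] at h1
  by_cases habs : stB K false u₀ = true ∧ c ∈ K
  · rw [if_pos habs, List.append_nil] at h1
    exact absurd h1 h2
  · rw [if_neg habs] at h1
    obtain ⟨e1, e2⟩ := List.append_inj' h1 rfl
    have hc : c = s := (List.cons.injEq _ _ _ _).mp e2 |>.1
    exact ⟨u₀, by rw [hc], e1⟩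

lemma cut {w : List α} : ∀ p q : List α, contract K w = p ++ q → p ≠ [] →
    ∃ w₁ w₂, w = w₁ ++ w₂ ∧ w₁ ∈ minPref (preim K p) ∧
      contractAux K (stB K false w₁) w₂ = q := by
  induction w using List.reverseRecOn with
  | nil =>
      intro p q h hp
      rw [contract_nil] at h
      exact absurd (List.append_eq_nil_iff.mp h.symm).1 hp
  | append_singleton w' c ih =>
      intro p q h hp
      rw [contract_concat] at h
      by_cases habs : stB K false w' = true ∧ c ∈ K
      · rw [if_pos habs, List.append_nil] at h
        obtain ⟨w₁, w₂, rfl, hmin, hq⟩ := ih p q h hp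
        refine ⟨w₁, w₂ ++ [c], by rw [List.append_assoc], hmin, ?_⟩
        rw [caux_append, hq, caux_cons, caux_nil, List.append_nil,
          ← stB_append, if_pos habs, List.append_nil]
      · rw [if_neg habs] at h
        rcases List.eq_nil_or_concat q with rfl | ⟨q', c', rfl⟩
        · rw [List.append_nil] at h
          refine ⟨w' ++ [c], [], (List.append_nil _).symm, ?_, caux_nil _ _⟩
          rw [mem_minPref K (by simp)]
          constructor
          · rw [contract_concat, if_neg habs]; exact h
          · rw [List.dropLast_concat]
            intro e
            rw [← h] at e
            have := congrArg List.length e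
            simp at this
        · rw [List.concat_eq_append, ← List.append_assoc] at h
          obtain ⟨h1, h2⟩ := List.append_inj' h rfl
          have hc : c = c' := (List.cons.injEq _ _ _ _).mp h2 |>.1
          obtain ⟨w₁, w₂, rfl, hmin, hq⟩ := ih p q' h1 hp
          refine ⟨w₁, w₂ ++ [c], by rw [List.append_assoc], hmin, ?_⟩
          rw [caux_append, hq, caux_cons, caux_nil, List.append_nil,
            ← stB_append, if_neg habs, hc, List.concat_eq_append]


lemma fuse_mem (x y : List α) (s : α) {u' v : List α}
    (hu : u' ∈ minPref (preim K (x ++ [s]))) (hv : v ∈ minPref (preim K (s :: y))) :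
    u' ++ v.tail ∈ minPref (preim K (x ++ s :: y)) := by
  obtain ⟨u₀, rfl, hu₀⟩ := minPref_concat_last K hu
  obtain ⟨v', rfl⟩ := preim_head K hv.1
  have hv1 : contract K (s :: v') = s :: y := hv.1
  rw [contract_cons] at hv1
  have hy : contractAux K (decide (s ∈ K)) v' = y :=
    ((List.cons.injEq _ _ _ _).mp hv1).2
  have hstu : stB K false (u₀ ++ [s]) = decide (s ∈ K) := stB_concat K false u₀ s
  have hu1 : contract K (u₀ ++ [s]) = x ++ [s] := hu.1
  have hcontract : contract K ((u₀ ++ [s]) ++ v') = x ++ s :: y := by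
    rw [contract_append, hstu, hy, hu1, List.append_assoc, List.singleton_append]
  rw [show (s :: v').tail = v' from rfl]
  rw [mem_minPref K (by simp)]
  refine ⟨hcontract, ?_⟩
  rcases List.eq_nil_or_concat v' with rfl | ⟨v'', d, hd⟩
  · have hy0 : y = [] := by rw [← hy, caux_nil]
    subst hy0
    rw [List.append_nil, List.dropLast_concat]
    have hu2 := ((mem_minPref K (by simp : u₀ ++ [s] ≠ [])).mp hu).2
    rw [List.dropLast_concat] at hu2
    exact hu2
  · have hvne : v' ≠ [] := by rw [hd]; simp [List.concat_eq_append]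
    rw [List.dropLast_append_of_ne_nil hvne, contract_append, hstu, hu1]
    intro e
    rw [show x ++ s :: y = (x ++ [s]) ++ y by rw [List.append_assoc, List.singleton_append]] at e
    have e' : contractAux K (decide (s ∈ K)) v'.dropLast = y := List.append_cancel_left e
    have hv2 := ((mem_minPref K (by simp : (s :: v') ≠ [])).mp hv).2
    apply hv2
    rw [List.dropLast_cons_of_ne_nil hvne, contract_cons, e']

lemma fuse_surj (x y : List α) (s : α) {w : List α}
    (hw : w ∈ minPref (preim K (x ++ s :: y))) :
    ∃ u' v, u' ∈ minPref (preim K (x ++ [s])) ∧ v ∈ minPref (preim K (s :: y)) ∧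
      w = u' ++ v.tail := by
  have hw1 : contract K w = (x ++ [s]) ++ y := by
    rw [List.append_assoc, List.singleton_append]; exact hw.1
  obtain ⟨w₁, w₂, rfl, hmin, hq⟩ := cut K (x ++ [s]) y hw1 (by simp)
  obtain ⟨u₀, hu₀eq, _⟩ := minPref_concat_last K hmin
  have hst : stB K false w₁ = decide (s ∈ K) := by rw [hu₀eq]; exact stB_concat K false u₀ s
  refine ⟨w₁, s :: w₂, hmin, ?_, rfl⟩
  rw [mem_minPref K (by simp)]
  constructor
  · rw [contract_cons, ← hst, hq]
  · rcases List.eq_nil_or_concat w₂ with rfl | ⟨w₂', d, hd⟩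
    · rw [show (s :: ([] : List α)).dropLast = [] from rfl, contract_nil]
      simp
    · have hwne : w₂ ≠ [] := by rw [hd]; simp [List.concat_eq_append]
      rw [List.dropLast_cons_of_ne_nil hwne, contract_cons, ← hst]
      intro e
      have e' : contractAux K (stB K false w₁) w₂.dropLast = y :=
        ((List.cons.injEq _ _ _ _).mp e).2
      have hw2 := ((mem_minPref K
        (by rw [hd]; simp [List.concat_eq_append] : w₁ ++ w₂ ≠ [])).mp hw).2
      apply hw2
      rw [List.dropLast_append_of_ne_nil hwne, contract_append, e']
      have : contract K w₁ = x ++ [s] := hmin.1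
      rw [this, List.append_assoc, List.singleton_append]

lemma fuse_inj (x y : List α) (s : α) {u₁ v₁ u₂ v₂ : List α}
    (h1 : u₁ ∈ minPref (preim K (x ++ [s]))) (h2 : v₁ ∈ minPref (preim K (s :: y)))
    (h3 : u₂ ∈ minPref (preim K (x ++ [s]))) (h4 : v₂ ∈ minPref (preim K (s :: y)))
    (he : u₁ ++ v₁.tail = u₂ ++ v₂.tail) : u₁ = u₂ ∧ v₁ = v₂ := by
  have hu : u₁ = u₂ := by
    have p1 : u₁ <+: u₁ ++ v₁.tail := List.prefix_append _ _
    have p2 : u₂ <+: u₁ ++ v₁.tail := he ▸ List.prefix_append u₂ v₂.tail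
    rcases List.prefix_or_prefix_of_prefix p1 p2 with h | h
    · by_contra hne
      exact h3.2 u₁ h hne h1.1
    · by_contra hne
      exact h1.2 u₂ h (fun e => hne e.symm) h3.1
  subst hu
  obtain ⟨v₁', rfl⟩ := preim_head K h2.1
  obtain ⟨v₂', rfl⟩ := preim_head K h4.1
  have : v₁' = v₂' := List.append_cancel_left he
  exact ⟨rfl, by rw [this]⟩

lemma setP_mult (P : List α → ℝ≥0∞)
    (hP4 : ∀ (x y : List α) (s : α), P (x ++ s :: y) = P (x ++ [s]) * P (s :: y))
    (x y : List α) (s : α) :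
    setP P (preim K (x ++ s :: y)) =
      setP P (preim K (x ++ [s])) * setP P (preim K (s :: y)) := by
  classical
  have hbij : Function.Bijective
      (fun p : ↥(minPref (preim K (x ++ [s]))) × ↥(minPref (preim K (s :: y))) =>
        (⟨p.1.1 ++ p.2.1.tail, fuse_mem K x y s p.1.2 p.2.2⟩ :
          ↥(minPref (preim K (x ++ s :: y))))) := by
    constructor
    · rintro ⟨⟨u₁, hu₁⟩, ⟨v₁, hv₁⟩⟩ ⟨⟨u₂, hu₂⟩, ⟨v₂, hv₂⟩⟩ hpe
      have he : u₁ ++ v₁.tail = u₂ ++ v₂.tail := congrArg Subtype.val hpe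
      obtain ⟨e1, e2⟩ := fuse_inj K x y s hu₁ hv₁ hu₂ hv₂ he
      simp only [Prod.mk.injEq, Subtype.mk.injEq]
      exact ⟨e1, e2⟩
    · rintro ⟨w, hw⟩
      obtain ⟨u', v, hu, hv, hwe⟩ := fuse_surj K x y s hw
      exact ⟨⟨⟨u', hu⟩, ⟨v, hv⟩⟩, Subtype.ext hwe.symm⟩
  have h1 : setP P (preim K (x ++ s :: y)) =
      ∑' p : ↥(minPref (preim K (x ++ [s]))) × ↥(minPref (preim K (s :: y))),
        P (p.1.1 ++ p.2.1.tail) :=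
    (Equiv.tsum_eq (Equiv.ofBijective _ hbij) (fun c => P c.1)).symm
  rw [h1]
  have h2 : ∀ p : ↥(minPref (preim K (x ++ [s]))) × ↥(minPref (preim K (s :: y))),
      P (p.1.1 ++ p.2.1.tail) = P p.1.1 * P p.2.1 := by
    rintro ⟨⟨u', hu⟩, ⟨v, hv⟩⟩
    obtain ⟨u₀, he, _⟩ := minPref_concat_last K hu
    obtain ⟨v', hv'⟩ := preim_head K hv.1
    show P (u' ++ v.tail) = P u' * P v
    rw [he, hv']
    rw [show (s :: v').tail = v' from rfl,
      show (u₀ ++ [s]) ++ v' = u₀ ++ s :: v' by rw [List.append_assoc, List.singleton_append],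
      hP4 u₀ v' s]
  rw [tsum_congr h2,
    ENNReal.tsum_prod (f := fun (u : ↥(minPref (preim K (x ++ [s]))))
      (v : ↥(minPref (preim K (s :: y)))) => P u.1 * P v.1)]
  simp_rw [ENNReal.tsum_mul_left]
  rw [ENNReal.tsum_mul_right]
  rfl

end Min

section Main

variable [Fintype α] [DecidableEq α]

lemma antichain_sum_le_s9 (P : List α → ℝ≥0∞) (hP : IsTPF P) :
    ∀ (n : ℕ) (s : α) (A : Finset (List α)),
      (∀ z ∈ A, z.length ≤ n) → (∀ z ∈ A, ∃ r, z = s :: r) →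
      (∀ z ∈ A, ∀ w ∈ A, z <+: w → z = w) → ∑ z ∈ A, P z ≤ 1 := by
  intro n
  induction n with
  | zero =>
      intro s A hlen hhead _
      have hA : A = ∅ := Finset.eq_empty_of_forall_notMem fun z hz => by
        obtain ⟨r, rfl⟩ := hhead z hz
        simpa using hlen _ hz
      simp [hA]
  | succ n ih =>
      intro s A hlen hhead hanti
      by_cases hs : [s] ∈ A
      · have hsub : A ⊆ {[s]} := fun z hz => by
          obtain ⟨r, rfl⟩ := hhead z hz
          have hpf : [s] <+: s :: r := ⟨r, rfl⟩
          rw [Finset.mem_singleton]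
          exact (hanti _ hs _ hz hpf).symm
        calc ∑ z ∈ A, P z ≤ ∑ z ∈ ({[s]} : Finset (List α)), P z :=
              Finset.sum_le_sum_of_subset hsub
          _ = P [s] := Finset.sum_singleton _ _
          _ ≤ 1 := hP.1 _
      · classical
        have key : ∀ z ∈ A, ∃ r, z = s :: z.getD 1 s :: r := by
          intro z hz
          obtain ⟨r, rfl⟩ := hhead z hz
          cases r with
          | nil => exact absurd hz hs
          | cons t r' => exact ⟨r', rfl⟩
        rw [← Finset.sum_fiberwise A (fun z => z.getD 1 s) P]
        have hbound : ∀ t : α,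
            ∑ z ∈ A.filter (fun z => z.getD 1 s = t), P z ≤ P [s, t] := by
          intro t
          have hmem : ∀ z ∈ A.filter (fun z => z.getD 1 s = t), ∃ r, z = s :: t :: r := by
            intro z hz
            rw [Finset.mem_filter] at hz
            obtain ⟨r, hr⟩ := key z hz.1
            rw [hz.2] at hr
            exact ⟨r, hr⟩
          calc ∑ z ∈ A.filter (fun z => z.getD 1 s = t), P z
              = ∑ z ∈ A.filter (fun z => z.getD 1 s = t), P [s, t] * P z.tail := by
                refine Finset.sum_congr rfl fun z hz => ?_
                obtain ⟨r, rfl⟩ := hmem z hz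
                rw [show (s :: t :: r) = [s] ++ t :: r from rfl, hP.2.2.2 [s] r t]
                rfl
            _ = P [s, t] * ∑ z ∈ A.filter (fun z => z.getD 1 s = t), P z.tail := by
                rw [Finset.mul_sum]
            _ ≤ P [s, t] * 1 := by
                refine mul_le_mul_right ?_ _
                rw [← Finset.sum_image (g := List.tail) (f := P)
                  (fun z hz w hw he => by
                    obtain ⟨r, rfl⟩ := hmem z hz
                    obtain ⟨r', rfl⟩ := hmem w hw
                    simp only [List.tail_cons] at he
                    rw [he])]
                refine ih t _ ?_ ?_ ?_
                · intro z hz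
                  rw [Finset.mem_image] at hz
                  obtain ⟨w, hw, rfl⟩ := hz
                  have := hlen w (Finset.mem_filter.mp hw).1
                  obtain ⟨r, rfl⟩ := hmem w hw
                  simp only [List.tail_cons]
                  simp only [List.length_cons] at this ⊢
                  omega
                · intro z hz
                  rw [Finset.mem_image] at hz
                  obtain ⟨w, hw, rfl⟩ := hz
                  obtain ⟨r, rfl⟩ := hmem w hw
                  exact ⟨r, rfl⟩
                · intro z hz w hw hpf
                  rw [Finset.mem_image] at hz hw
                  obtain ⟨z', hz', rfl⟩ := hz
                  obtain ⟨w', hw', rfl⟩ := hw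
                  obtain ⟨r, rfl⟩ := hmem z' hz'
                  obtain ⟨r', rfl⟩ := hmem w' hw'
                  simp only [List.tail_cons] at hpf ⊢
                  have : (s :: t :: r) = (s :: t :: r') :=
                    hanti _ (Finset.mem_filter.mp hz').1 _ (Finset.mem_filter.mp hw').1
                      (by rw [List.cons_prefix_cons]; exact ⟨rfl, hpf⟩)
                  exact (List.cons.injEq _ _ _ _).mp this |>.2
            _ = P [s, t] := mul_one _
        calc ∑ t : α, ∑ z ∈ A.filter (fun z => z.getD 1 s = t), P z
            ≤ ∑ t : α, P [s, t] := Finset.sum_le_sum fun t _ => hbound t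
          _ ≤ 1 := hP.2.2.1 s

lemma abstr_one (P : List α → ℝ≥0∞) (a : α) (K : Finset α) {z : List α}
    (h : z.length = 1) : abstr P a K z = 1 := by
  simp only [abstr]
  rw [if_pos h]

lemma abstr_zero (P : List α → ℝ≥0∞) (a : α) (K : Finset α) {z : List α}
    (h1 : 2 ≤ z.length) (h2 : ∃ c ∈ z, c ∈ interior P a K) : abstr P a K z = 0 := by
  simp only [abstr]
  rw [if_neg (by omega), if_pos ⟨h1, h2⟩]

lemma abstr_setP (P : List α → ℝ≥0∞) (a : α) (K : Finset α) {z : List α}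
    (h1 : z.length ≠ 1) (h2 : ¬ ∃ c ∈ z, c ∈ interior P a K) :
    abstr P a K z = setP P (preim K z) := by
  simp only [abstr]
  rw [if_neg h1, if_neg (fun h => h2 h.2)]

lemma abstr_le_setP (P : List α → ℝ≥0∞) (a : α) (K : Finset α) {z : List α}
    (h1 : z.length ≠ 1) : abstr P a K z ≤ setP P (preim K z) := by
  by_cases h2 : ∃ c ∈ z, c ∈ interior P a K
  · by_cases h3 : 2 ≤ z.length
    · rw [abstr_zero P a K h3 h2]; exact zero_le
    · simp only [abstr]
      rw [if_neg h1, if_neg (fun h => h3 h.1)]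
  · rw [abstr_setP P a K h1 h2]

lemma abstr_pair_sum_le (P : List α → ℝ≥0∞) (hP : IsTPF P) (a : α) (K : Finset α)
    (s : α) : ∑ t : α, abstr P a K [s, t] ≤ 1 := by
  have hle : ∀ t : α, abstr P a K [s, t] ≤ setP P (preim K [s, t]) := fun t =>
    abstr_le_setP P a K (by simp)
  refine le_trans (Finset.sum_le_sum fun t _ => hle t) ?_
  have h1 : ∑ t : α, setP P (preim K [s, t]) =
      ∑' p : (Σ t : α, ↥(minPref (preim K [s, t]))), P p.2.1 := by
    rw [← tsum_fintype (L := SummationFilter.unconditional _)]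
    exact (ENNReal.tsum_sigma (fun t (z : ↥(minPref (preim K [s, t]))) => P z.1)).symm
  rw [h1, ENNReal.tsum_eq_iSup_sum]
  refine iSup_le fun F => ?_
  have hinj : ∀ p ∈ F, ∀ q ∈ F,
      (p.2.1 : List α) = q.2.1 → p = q := by
    rintro ⟨t₁, z₁⟩ _ ⟨t₂, z₂⟩ _ he
    have e1 : contract K z₁.1 = [s, t₁] := z₁.2.1
    have e2 : contract K z₂.1 = [s, t₂] := z₂.2.1
    have ht : t₁ = t₂ := by
      have : ([s, t₁] : List α) = [s, t₂] := by rw [← e1, he, e2]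
      exact ((List.cons.injEq _ _ _ _).mp ((List.cons.injEq _ _ _ _).mp this).2).1
    subst ht
    exact congrArg (Sigma.mk t₁) (Subtype.ext he)
  rw [← Finset.sum_image (g := fun p : (Σ t : α, ↥(minPref (preim K [s, t]))) => p.2.1)
    (f := P) hinj]
  refine antichain_sum_le_s9 P hP ((F.image fun p => p.2.1).sup List.length) s _
    (fun z hz => Finset.le_sup hz) ?_ ?_
  · intro z hz
    rw [Finset.mem_image] at hz
    obtain ⟨p, _, rfl⟩ := hz
    exact preim_head K p.2.2.1
  · intro z hz w hw hpf
    rw [Finset.mem_image] at hz hw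
    obtain ⟨p, _, rfl⟩ := hz
    obtain ⟨q, _, rfl⟩ := hw
    have e1 : contract K p.2.1 = [s, p.1] := p.2.2.1
    have e2 : contract K q.2.1 = [s, q.1] := q.2.2.1
    have hcpf : contract K p.2.1 <+: contract K q.2.1 := contract_prefix K hpf
    have hceq : contract K p.2.1 = contract K q.2.1 :=
      hcpf.eq_of_length (by rw [e1, e2]; simp)
    by_contra hne
    exact q.2.2.2 p.2.1 hpf hne (show contract K p.2.1 = [s, q.1] by rw [hceq, e2])

lemma abstr_mult (P : List α → ℝ≥0∞) (hP : IsTPF P) (a : α) (K : Finset α)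
    (x y : List α) (s : α) :
    abstr P a K (x ++ s :: y) = abstr P a K (x ++ [s]) * abstr P a K (s :: y) := by
  rcases eq_or_ne x [] with rfl | hx
  · simp only [List.nil_append]
    rw [abstr_one P a K (show ([s] : List α).length = 1 from rfl), one_mul]
  rcases eq_or_ne y [] with rfl | hy
  · rw [abstr_one P a K (show (s :: ([] : List α)).length = 1 from rfl), mul_one]
  have hxl : 1 ≤ x.length := List.length_pos_iff.mpr hx
  have hyl : 1 ≤ y.length := List.length_pos_iff.mpr hy
  have l1 : (x ++ s :: y).length ≠ 1 := by
    simp only [List.length_append, List.length_cons]; omega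
  have l2 : (x ++ [s]).length ≠ 1 := by
    simp only [List.length_append, List.length_singleton]; omega
  have l3 : (s :: y).length ≠ 1 := by
    simp only [List.length_cons]; omega
  by_cases hint : ∃ c ∈ x ++ s :: y, c ∈ interior P a K
  · rw [abstr_zero P a K (by simp only [List.length_append, List.length_cons]; omega) hint]
    obtain ⟨c, hc, hci⟩ := hint
    rcases List.mem_append.mp hc with hcx | hcsy
    · rw [abstr_zero P a K (by simp only [List.length_append, List.length_singleton]; omega)
        ⟨c, List.mem_append_left _ hcx, hci⟩, zero_mul]
    · rw [abstr_zero P a K (by simp only [List.length_cons]; omega) ⟨c, hcsy, hci⟩, mul_zero]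
  · have h2 : ¬ ∃ c ∈ x ++ [s], c ∈ interior P a K := by
      rintro ⟨c, hc, hci⟩
      refine hint ⟨c, ?_, hci⟩
      rcases List.mem_append.mp hc with h | h
      · exact List.mem_append_left _ h
      · rw [List.mem_singleton] at h
        subst h
        exact List.mem_append_right _ List.mem_cons_self
    have h3 : ¬ ∃ c ∈ s :: y, c ∈ interior P a K := by
      rintro ⟨c, hc, hci⟩
      exact hint ⟨c, List.mem_append_right _ hc, hci⟩
    rw [abstr_setP P a K l1 hint, abstr_setP P a K l2 h2, abstr_setP P a K l3 h3]
    exact setP_mult K P hP.2.2.2 x y s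

lemma abstr_le_one (P : List α → ℝ≥0∞) (hP : IsTPF P) (a : α) (K : Finset α) :
    ∀ z : List α, abstr P a K z ≤ 1 := by
  intro z
  induction z with
  | nil =>
      rw [abstr_setP P a K (by simp) (by simp)]
      have h1 : minPref (preim K ([] : List α)) = {[]} := by
        ext z
        constructor
        · intro hz
          have : contract K z = [] := hz.1
          exact (contract_eq_nil K).mp this
        · rintro rfl
          exact ⟨contract_nil K, fun u hu hne _ => hne (List.prefix_nil.mp hu)⟩
      show (∑' z : ↥(minPref (preim K ([] : List α))), P z.1) ≤ 1
      rw [h1, tsum_singleton]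
      exact hP.1 _
  | cons s z ih =>
      cases z with
      | nil => exact (abstr_one P a K (show ([s] : List α).length = 1 from rfl)).le
      | cons t r =>
          rw [show s :: t :: r = [s] ++ t :: r from rfl, abstr_mult P hP a K [s] r t]
          refine mul_le_one' ?_ ih
          calc abstr P a K [s, t] ≤ ∑ t' : α, abstr P a K [s, t'] :=
                Finset.single_le_sum (f := fun t' => abstr P a K [s, t'])
                  (fun _ _ => zero_le) (Finset.mem_univ t)
            _ ≤ 1 := abstr_pair_sum_le P hP a K s

end Main

end PA

end AuxLemmas

open scoped ENNReal in
/-- the path abstraction `P_{S₁}^a` is itself a substochastic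
transition probability function. -/
theorem abstr_isTPF {α : Type*} [Fintype α] [DecidableEq α]
    (P : List α → ℝ≥0∞) (hP : PA.IsTPF P) (a : α) (S₁ : Finset α) :
    PA.IsTPF (PA.abstr P a S₁) := by
  refine ⟨PA.abstr_le_one P hP a S₁,
    fun s => PA.abstr_one P a S₁ (show ([s] : List α).length = 1 from rfl),
    fun s => PA.abstr_pair_sum_le P hP a S₁ s,
    fun x y s => PA.abstr_mult P hP a S₁ x y s⟩
end

section
/- If M = (P, a) ∈ ℳ(S, a) is a substochastic DTMC with S₁ ⊆ S₂ ⊆ S, then the interior of S₂ in M equals the interior of S₂ in M − S₁: (S₂)₀^M = (S₂)₀^{M−S₁}, where for K ⊆ S, K₀^M := {s ∈ K∖{a} | P((S∖K)s) = 0}. Moreover, (S₁)₀^M ⊆ (S₂)₀^M. -/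
open scoped ENNReal

section Aux

open scoped ENNReal

variable {α : Type*} [DecidableEq α]

lemma PA.contractAux_length_le (K : Finset α) (b : Bool) (x : List α) :
    (PA.contractAux K b x).length ≤ x.length := by
  induction x generalizing b with
  | nil => simp [PA.contractAux]
  | cons c x ih =>
    simp only [PA.contractAux]
    split_ifs with h1 h2
    · exact Nat.le_succ_of_le (ih true)
    · simpa using ih true
    · simpa using ih false

lemma PA.contract_cons_s12 (K : Finset α) (c : α) (x : List α) :
    PA.contract K (c :: x) =
      c :: (if c ∈ K then PA.contractAux K true x else PA.contractAux K false x) := by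
  simp only [PA.contract, PA.contractAux]
  split_ifs <;> simp_all

lemma PA.minPref_preim_pair (K : Finset α) (t s : α) (ht : t ∉ K) :
    PA.minPref (PA.preim K [t, s]) = {[t, s]} := by
  have hmem : [t, s] ∈ PA.preim K [t, s] := by
    show PA.contract K [t, s] = [t, s]
    simp only [PA.contract, PA.contractAux, if_neg ht]
    split_ifs <;> simp_all
  ext x
  constructor
  · rintro ⟨hx, hmin⟩
    have hx' : PA.contract K x = [t, s] := hx
    have hpre : [t, s] <+: x := by
      match x with
      | [] => simp [PA.contract, PA.contractAux] at hx'
      | c :: w =>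
        rw [PA.contract_cons_s12] at hx'
        obtain ⟨rfl, hw⟩ := List.cons_eq_cons.mp hx'
        rw [if_neg ht] at hw
        match w with
        | [] => simp [PA.contractAux] at hw
        | d :: w' =>
          have hw2 : PA.contract K (d :: w') = [s] := hw
          rw [PA.contract_cons_s12] at hw2
          obtain ⟨rfl, -⟩ := List.cons_eq_cons.mp hw2
          exact ⟨w', rfl⟩
    by_contra hne
    exact hmin [t, s] hpre (fun hh => hne hh.symm) hmem
  · rintro rfl
    refine ⟨hmem, fun x' hpre hne hx' => ?_⟩
    have hlt : x'.length < 2 := by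
      rcases Nat.lt_or_ge x'.length 2 with h2 | h2
      · exact h2
      · exact absurd (List.IsPrefix.eq_of_length hpre
          (le_antisymm (hpre.length_le) h2)) hne
    have : (PA.contract K x').length ≤ x'.length := PA.contractAux_length_le K false x'
    have hx2 : (PA.contract K x').length = 2 := by rw [hx']; rfl
    omega

lemma PA.setP_preim_pair (P : List α → ℝ≥0∞) (K : Finset α) (t s : α) (ht : t ∉ K) :
    PA.setP P (PA.preim K [t, s]) = P [t, s] := by
  rw [PA.setP, PA.minPref_preim_pair K t s ht, tsum_singleton]

end Aux

open scoped ENNReal in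
/-- `(S₂)₀^{M−S₁} = (S₂)₀^M` and `(S₁)₀^M ⊆ (S₂)₀^M` for `S₁ ⊆ S₂`. -/
theorem interior_abstr {α : Type*} [Fintype α] [DecidableEq α]
    (a : α) (S₁ S₂ : Finset α) (h : S₁ ⊆ S₂)
    (P : List α → ℝ≥0∞) (hP : PA.IsTPF P) :
    PA.interior (PA.abstr P a S₁) a S₂ = PA.interior P a S₂ ∧
    PA.interior P a S₁ ⊆ PA.interior P a S₂ := by
  have key : ∀ s : α,
      ((∑ t ∈ S₂ᶜ, PA.abstr P a S₁ [t, s]) = 0 ↔ (∑ t ∈ S₂ᶜ, P [t, s]) = 0) := by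
    intro s
    by_cases hsi : s ∈ PA.interior P a S₁
    · have hP0 : (∑ t ∈ S₂ᶜ, P [t, s]) = 0 := by
        have h0 := hsi.2.2
        rw [Finset.sum_eq_zero_iff] at h0 ⊢
        intro t htc
        exact h0 t (by
          simp only [Finset.mem_compl] at htc ⊢
          exact fun hts => htc (h hts))
      have hA0 : (∑ t ∈ S₂ᶜ, PA.abstr P a S₁ [t, s]) = 0 := by
        rw [Finset.sum_eq_zero_iff]
        intro t _
        simp only [PA.abstr]
        rw [if_neg (by simp), if_pos ⟨by simp, s, by simp, hsi⟩]
      rw [hP0, hA0]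
    · have heq : ∀ t ∈ S₂ᶜ, PA.abstr P a S₁ [t, s] = P [t, s] := by
        intro t htc
        simp only [Finset.mem_compl] at htc
        have ht1 : t ∉ S₁ := fun hts => htc (h hts)
        have hti : t ∉ PA.interior P a S₁ := fun hti' => ht1 hti'.1
        simp only [PA.abstr]
        rw [if_neg (by simp), if_neg, PA.setP_preim_pair P S₁ t s ht1]
        rintro ⟨-, c, hc, hci⟩
        simp only [List.mem_cons, List.mem_singleton, List.not_mem_nil, or_false]
          at hc
        rcases hc with rfl | rfl
        · exact hti hci
        · exact hsi hci
      rw [Finset.sum_congr rfl heq]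
  constructor
  · ext s
    simp only [PA.interior, Set.mem_setOf_eq]
    exact and_congr_right fun _ => and_congr_right fun _ => key s
  · rintro s ⟨h1, h2, h3⟩
    refine ⟨h h1, h2, ?_⟩
    rw [Finset.sum_eq_zero_iff] at h3 ⊢
    intro t htc
    exact h3 t (by
      simp only [Finset.mem_compl] at htc ⊢
      exact fun hts => htc (h hts))
end
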